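/- arXiv:1408.5969 — 2 statements merged into one kernel-verified Lean document; each statement's English description precedes it below -/
import Mathlib

section
/- For a fixed modular game and a fixed player, there is a one-to-one correspondence (bijection) between the modular strategies of that player and the strategy trees encoding them. -/
/-- A recursive game graph presented module-wise for a fixed player: each
module has an entry, every vertex has at most k (distinct) local successors
(returns of a call being the successors of the call), and vertices of the
fixed player are marked by `isP0`. -/
structure ModGame (V : Type) (k : ℕ) where
  M : Type
  entry : M → V
  succs : V → Fin k → Option V
  isP0 : V → Prop
  distinct : ∀ v (i j : Fin k), (succs v i).isSome →
    succs v i = succs v j → i = j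

inductive Lab (V : Type) (k : ℕ) where
  | dummy : Lab V k
  | nd : V → Option (Fin k) → Lab V k

/-- A strategy tree: a k-ary tree for each module, whose root is labeled by
the entry of the module, in which the subtree of each module is its unrolling
(children of a node labeled v follow the successors of v, dummies pad the
tree to full k-ary branching), and each vertex of the fixed player carries
the index of the successor selected by the encoded strategy. -/
structure StrategyTree {V : Type} {k : ℕ} (G : ModGame V k) where
  lab : G.M → List (Fin k) → Lab V k
  root : ∀ m, ∃ c, lab m [] = Lab.nd (G.entry m) c
  child_nd : ∀ m p v c (i : Fin k), lab m p = Lab.nd v c →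
      (∀ v', G.succs v i = some v' → ∃ c', lab m (p ++ [i]) = Lab.nd v' c') ∧
      (G.succs v i = none → lab m (p ++ [i]) = Lab.dummy)
  child_dummy : ∀ m p (i : Fin k), lab m p = Lab.dummy →
      lab m (p ++ [i]) = Lab.dummy
  choice : ∀ m p v c, lab m p = Lab.nd v c →
      (G.isP0 v → ∃ j, c = some j ∧ (G.succs v j).isSome) ∧
      (¬ G.isP0 v → c = none)

/-- A valid local memory of module m: a sequence of vertices starting at the
entry of m and following local successors. -/
def ValidMem {V : Type} {k : ℕ} (G : ModGame V k) (m : G.M)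
    (l : List V) : Prop :=
  l.head? = some (G.entry m) ∧
    List.Chain' (fun a b => ∃ i, G.succs a i = some b) l

/-- A modular strategy of the fixed player: a family of local strategies, one
per module, selecting a legal move exactly at the valid local memories ending
in a vertex of the player. -/
structure ModStrat {V : Type} {k : ℕ} (G : ModGame V k) where
  f : G.M → List V → Option V
  dom : ∀ m l, (f m l).isSome ↔
    (ValidMem G m l ∧ ∃ v, l.getLast? = some v ∧ G.isP0 v)
  legal : ∀ m l v u, l.getLast? = some u → f m l = some v →
    ∃ i, G.succs u i = some v
section Aux

variable {V : Type} {k : ℕ}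

open Classical in
/-- The (unique) index of the successor `v` of `u`, if any. -/
noncomputable def idxOf (G : ModGame V k) (u v : V) : Option (Fin k) :=
  if h : ∃ i, G.succs u i = some v then some h.choose else none

lemma idxOf_eq_some {G : ModGame V k} {u v : V} {i : Fin k}
    (h : G.succs u i = some v) : idxOf G u v = some i := by
  have hex : ∃ j, G.succs u j = some v := ⟨i, h⟩
  have hc := hex.choose_spec
  have hi : hex.choose = i :=
    G.distinct u _ i (by rw [hc]; rfl) (hc.trans h.symm)
  simp [idxOf, dif_pos hex, hi]

lemma idxOf_spec {G : ModGame V k} {u v : V} {i : Fin k}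
    (h : idxOf G u v = some i) : G.succs u i = some v := by
  unfold idxOf at h
  split_ifs at h with hex
  · obtain rfl : hex.choose = i := by injection h
    exact hex.choose_spec

/-- Follow an index path from `u`, collecting the vertex trace and the last
vertex. -/
def run (G : ModGame V k) : V → List (Fin k) → Option (List V × V)
  | u, [] => some ([u], u)
  | u, i :: p => (G.succs u i).bind fun v =>
      (run G v p).map fun lw => (u :: lw.1, lw.2)

abbrev GRel (G : ModGame V k) (a b : V) : Prop := ∃ i, G.succs a i = some b

lemma run_snoc (G : ModGame V k) (u : V) (p : List (Fin k)) (i : Fin k) :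
    run G u (p ++ [i]) = (run G u p).bind fun lw =>
      (G.succs lw.2 i).map fun v => (lw.1 ++ [v], v) := by
  induction p generalizing u with
  | nil =>
    cases h : G.succs u i <;> simp [run, h]
  | cons j p ih =>
    simp only [List.cons_append, run, List.append_eq]
    cases h : G.succs u j with
    | none => simp
    | some v =>
      simp only [Option.bind_some]
      rw [ih v]
      cases hr : run G v p with
      | none => simp
      | some lw =>
        simp only [Option.bind_some, Option.map_some]
        cases hs : G.succs lw.2 i <;> simp [hs]

lemma run_spec {G : ModGame V k} : ∀ {p : List (Fin k)} {u : V} {l : List V}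
    {w : V}, run G u p = some (l, w) →
    l.head? = some u ∧ List.Chain' (GRel G) l ∧ l.getLast? = some w := by
  intro p
  induction p with
  | nil =>
    intro u l w h
    simp only [run, Option.some_inj, Prod.mk.injEq] at h
    obtain ⟨rfl, rfl⟩ := h
    simp
    exact List.isChain_singleton _
  | cons i p ih =>
    intro u l w h
    simp only [run] at h
    cases hs : G.succs u i with
    | none => rw [hs] at h; simp at h
    | some v =>
      rw [hs] at h
      simp only [Option.bind_some, Option.map_eq_some_iff] at h
      obtain ⟨lw, hrun, heq⟩ := h
      obtain ⟨l', w'⟩ := lw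
      simp only [Prod.mk.injEq] at heq
      obtain ⟨rfl, rfl⟩ := heq
      obtain ⟨hh, hc, hl⟩ := ih hrun
      refine ⟨rfl, ?_, ?_⟩
      · refine List.isChain_cons.mpr ?_
        exact ⟨fun y hy => ⟨i, by rwa [hh, Option.mem_def, Option.some_inj] at hy ▸ hs⟩, hc⟩
      · cases l' with
        | nil => simp at hh
        | cons a t => rw [List.getLast?_cons_cons]; exact hl

/-- Recover the index path from a vertex trace. -/
noncomputable def indices (G : ModGame V k) : List V → Option (List (Fin k))
  | [] => some []
  | [_] => some []
  | u :: v :: rest =>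
      (idxOf G u v).bind fun i => (indices G (v :: rest)).map (i :: ·)

lemma indices_run {G : ModGame V k} : ∀ {p : List (Fin k)} {u : V}
    {l : List V} {w : V}, run G u p = some (l, w) → indices G l = some p := by
  intro p
  induction p with
  | nil =>
    intro u l w h
    simp only [run, Option.some_inj, Prod.mk.injEq] at h
    obtain ⟨rfl, rfl⟩ := h
    rfl
  | cons i p ih =>
    intro u l w h
    simp only [run] at h
    cases hs : G.succs u i with
    | none => rw [hs] at h; simp at h
    | some v =>
      rw [hs] at h
      simp only [Option.bind_some, Option.map_eq_some_iff] at h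
      obtain ⟨⟨l', w'⟩, hrun, heq⟩ := h
      simp only [Prod.mk.injEq] at heq
      obtain ⟨rfl, rfl⟩ := heq
      have hh := (run_spec hrun).1
      have hi := ih hrun
      cases l' with
      | nil => simp at hh
      | cons a t =>
        simp only [List.head?_cons, Option.some_inj] at hh
        subst hh
        simp [indices, idxOf_eq_some hs, hi]

lemma indices_chain {G : ModGame V k} : ∀ {l : List V} {p : List (Fin k)},
    indices G l = some p → List.Chain' (GRel G) l := by
  intro l
  induction l with
  | nil => intro p _; exact List.isChain_nil
  | cons u t ih =>
    intro p h
    cases t with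
    | nil => exact List.isChain_singleton _
    | cons v rest =>
      simp only [indices, Option.bind_eq_some_iff, Option.map_eq_some_iff] at h
      obtain ⟨i, hi, p', hp', rfl⟩ := h
      exact List.isChain_cons_cons.mpr ⟨⟨i, idxOf_spec hi⟩, ih hp'⟩

lemma chain_run {G : ModGame V k} : ∀ (rest : List V) (u : V),
    List.Chain' (GRel G) (u :: rest) →
    ∃ p w, run G u p = some (u :: rest, w) := by
  intro rest
  induction rest with
  | nil => intro u _; exact ⟨[], u, rfl⟩
  | cons v rest ih =>
    intro u hc
    replace hc := List.isChain_cons_cons.mp hc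
    obtain ⟨⟨i, hi⟩, hc'⟩ := hc
    obtain ⟨p, w, hr⟩ := ih v hc'
    exact ⟨i :: p, w, by simp [run, hi, hr]⟩

end Aux
section Main

variable {V : Type} {k : ℕ}

/-- The labeling of the strategy tree encoding a modular strategy. -/
noncomputable def labF (G : ModGame V k) (s : ModStrat G) (m : G.M)
    (p : List (Fin k)) : Lab V k :=
  match run G (G.entry m) p with
  | none => Lab.dummy
  | some lw => Lab.nd lw.2 ((s.f m lw.1).bind (idxOf G lw.2))

lemma labF_none {G : ModGame V k} {s : ModStrat G} {m : G.M}
    {p : List (Fin k)} (h : run G (G.entry m) p = none) :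
    labF G s m p = Lab.dummy := by simp [labF, h]

lemma labF_some {G : ModGame V k} {s : ModStrat G} {m : G.M}
    {p : List (Fin k)} {l : List V} {w : V}
    (h : run G (G.entry m) p = some (l, w)) :
    labF G s m p = Lab.nd w ((s.f m l).bind (idxOf G w)) := by simp [labF, h]

/-- The strategy tree encoding a modular strategy. -/
noncomputable def toTree (G : ModGame V k) (s : ModStrat G) :
    StrategyTree G where
  lab := labF G s
  root m := ⟨_, labF_some (l := [G.entry m]) (w := G.entry m) rfl⟩
  child_nd m p v c i hlab := by
    cases hr : run G (G.entry m) p with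
    | none => rw [labF_none hr] at hlab; exact absurd hlab (by simp)
    | some lw =>
      obtain ⟨l, w⟩ := lw
      rw [labF_some hr] at hlab
      obtain ⟨rfl, -⟩ : w = v ∧ _ := by
        injection hlab with h1 h2; exact ⟨h1, h2⟩
      have hsnoc := run_snoc G (G.entry m) p i
      rw [hr] at hsnoc
      simp only [Option.bind_some] at hsnoc
      constructor
      · intro v' hs
        rw [hs] at hsnoc
        exact ⟨_, labF_some (by simpa using hsnoc)⟩
      · intro hs
        rw [hs] at hsnoc
        exact labF_none (by simpa using hsnoc)
  child_dummy m p i hlab := by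
    cases hr : run G (G.entry m) p with
    | none =>
      have hsnoc := run_snoc G (G.entry m) p i
      rw [hr] at hsnoc
      exact labF_none (by simpa using hsnoc)
    | some lw =>
      rw [labF_some (l := lw.1) (w := lw.2) (by rw [hr])] at hlab
      exact absurd hlab (by simp)
  choice m p v c hlab := by
    cases hr : run G (G.entry m) p with
    | none => rw [labF_none hr] at hlab; exact absurd hlab (by simp)
    | some lw =>
      obtain ⟨l, w⟩ := lw
      rw [labF_some hr] at hlab
      injection hlab with h1 h2
      subst h1; subst h2
      obtain ⟨hh, hc, hl⟩ := run_spec hr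
      constructor
      · intro hP0
        have hdom : (s.f m l).isSome :=
          (s.dom m l).mpr ⟨⟨hh, hc⟩, w, hl, hP0⟩
        obtain ⟨v', hv'⟩ := Option.isSome_iff_exists.mp hdom
        obtain ⟨i, hi⟩ := s.legal m l v' w hl hv'
        refine ⟨i, ?_, by rw [hi]; rfl⟩
        rw [hv', Option.bind_some, idxOf_eq_some hi]
      · intro hnP0
        have hnone : s.f m l = none := by
          by_contra hne
          have := (s.dom m l).mp (Option.ne_none_iff_isSome.mp hne)
          obtain ⟨-, v'', hl'', hP0''⟩ := this
          rw [hl] at hl''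
          injection hl'' with h
          exact hnP0 (h ▸ hP0'')
        rw [hnone]; rfl

def labC : Lab V k → Option (Option (Fin k))
  | Lab.dummy => none
  | Lab.nd _ c => some c

open Classical in
/-- The modular strategy encoded by a strategy tree. -/
noncomputable def stratF (G : ModGame V k) (t : StrategyTree G) (m : G.M)
    (l : List V) : Option V :=
  if l.head? = some (G.entry m) then
    (indices G l).bind fun p => l.getLast?.bind fun w =>
      (labC (t.lab m p)).bind fun c => c.bind (G.succs w)
  else none

/-- Any run from the entry of `m` ends in a non-dummy node of the tree. -/
lemma lab_run {G : ModGame V k} (t : StrategyTree G) {m : G.M} :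
    ∀ {p : List (Fin k)} {l : List V} {w : V},
    run G (G.entry m) p = some (l, w) → ∃ c, t.lab m p = Lab.nd w c := by
  intro p
  induction p using List.reverseRecOn with
  | nil =>
    intro l w h
    simp only [run, Option.some_inj, Prod.mk.injEq] at h
    obtain ⟨rfl, rfl⟩ := h
    exact t.root m
  | append_singleton p i ih =>
    intro l w h
    rw [run_snoc] at h
    cases hr : run G (G.entry m) p with
    | none => rw [hr] at h; simp at h
    | some lw =>
      obtain ⟨l', w'⟩ := lw
      rw [hr] at h
      simp only [Option.bind_some, Option.map_eq_some_iff] at h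
      simp only [Prod.mk.injEq] at h
      obtain ⟨v, hs, h1, h2⟩ := h
      subst h1; subst h2
      obtain ⟨c, hc⟩ := ih hr
      exact (t.child_nd m p w' c i hc).1 _ hs

lemma lab_run_none {G : ModGame V k} (t : StrategyTree G) {m : G.M} :
    ∀ {p : List (Fin k)}, run G (G.entry m) p = none →
    t.lab m p = Lab.dummy := by
  intro p
  induction p using List.reverseRecOn with
  | nil => intro h; exact absurd h (by simp [run])
  | append_singleton p i ih =>
    intro h
    rw [run_snoc] at h
    cases hr : run G (G.entry m) p with
    | none => exact t.child_dummy m p i (ih hr)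
    | some lw =>
      rw [hr] at h
      simp only [Option.bind_some, Option.map_eq_none_iff] at h
      obtain ⟨c, hc⟩ := lab_run t hr
      exact (t.child_nd m p lw.2 c i hc).2 h

end Main
section Final

variable {V : Type} {k : ℕ}

lemma stratF_eq {G : ModGame V k} (t : StrategyTree G) {m : G.M}
    {p : List (Fin k)} {l : List V} {w x : V} {c : Option (Fin k)}
    (hrun : run G (G.entry m) p = some (l, w))
    (hlab : t.lab m p = Lab.nd x c) :
    stratF G t m l = c.bind (G.succs w) := by
  obtain ⟨hh, hc, hl⟩ := run_spec hrun
  have hi := indices_run hrun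
  rw [stratF, if_pos hh, hi, Option.bind_some, hl, Option.bind_some, hlab]
  rfl

lemma stratF_chain_none {G : ModGame V k} (t : StrategyTree G) {m : G.M}
    {l : List V} (h : ¬ List.Chain' (GRel G) l) : stratF G t m l = none := by
  have hi : indices G l = none := by
    cases hi : indices G l with
    | none => rfl
    | some p => exact absurd (indices_chain hi) h
  rw [stratF]
  split_ifs with hh
  · rw [hi]; rfl
  · rfl

/-- The modular strategy encoded by a strategy tree. -/
noncomputable def toStrat (G : ModGame V k) (t : StrategyTree G) :
    ModStrat G where
  f := stratF G t
  dom m l := by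
    constructor
    · intro hs
      by_cases hh : l.head? = some (G.entry m)
      swap
      · rw [stratF, if_neg hh] at hs; simp at hs
      by_cases hcc : List.Chain' (GRel G) l
      swap
      · rw [stratF_chain_none t hcc] at hs; simp at hs
      obtain ⟨u, rest, rfl⟩ : ∃ u rest, l = u :: rest := by
        cases l with
        | nil => simp at hh
        | cons a t => exact ⟨a, t, rfl⟩
      obtain rfl : u = G.entry m := by simpa using hh
      obtain ⟨p, w, hrun⟩ := chain_run rest _ hcc
      obtain ⟨-, -, hl'⟩ := run_spec hrun
      obtain ⟨c, hlab⟩ := lab_run t hrun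
      rw [stratF_eq t hrun hlab] at hs
      refine ⟨⟨hh, hcc⟩, w, hl', ?_⟩
      by_contra hnP0
      rw [(t.choice m p w c hlab).2 hnP0] at hs
      simp at hs
    · rintro ⟨⟨hh, hcc⟩, v, hl, hP0⟩
      obtain ⟨u, rest, rfl⟩ : ∃ u rest, l = u :: rest := by
        cases l with
        | nil => simp at hh
        | cons a t => exact ⟨a, t, rfl⟩
      obtain rfl : u = G.entry m := by simpa using hh
      obtain ⟨p, w, hrun⟩ := chain_run rest _ hcc
      obtain ⟨-, -, hl'⟩ := run_spec hrun
      obtain rfl : v = w := by rw [hl] at hl'; injection hl'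
      obtain ⟨c, hlab⟩ := lab_run t hrun
      rw [stratF_eq t hrun hlab]
      obtain ⟨j, rfl, hj⟩ := (t.choice m p v c hlab).1 hP0
      simpa using hj
  legal m l v u hlast hf := by
    by_cases hh : l.head? = some (G.entry m)
    swap
    · rw [stratF, if_neg hh] at hf; cases hf
    by_cases hcc : List.Chain' (GRel G) l
    swap
    · rw [stratF_chain_none t hcc] at hf; cases hf
    obtain ⟨a, rest, rfl⟩ : ∃ a rest, l = a :: rest := by
      cases l with
      | nil => simp at hh
      | cons a t => exact ⟨a, t, rfl⟩
    obtain rfl : a = G.entry m := by simpa using hh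
    obtain ⟨p, w, hrun⟩ := chain_run rest _ hcc
    obtain ⟨-, -, hl'⟩ := run_spec hrun
    obtain rfl : u = w := by rw [hlast] at hl'; injection hl'
    obtain ⟨c, hlab⟩ := lab_run t hrun
    rw [stratF_eq t hrun hlab] at hf
    obtain ⟨j, hc, hj⟩ := Option.bind_eq_some_iff.mp hf
    exact ⟨j, hj⟩

lemma ModStrat.ext' {G : ModGame V k} {s1 s2 : ModStrat G}
    (h : s1.f = s2.f) : s1 = s2 := by
  cases s1; cases s2; cases h; rfl

lemma StrategyTree.ext' {G : ModGame V k} {t1 t2 : StrategyTree G}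
    (h : t1.lab = t2.lab) : t1 = t2 := by
  cases t1; cases t2; cases h; rfl

end Final
/-- There is a one-to-one correspondence between the modular strategies of
the fixed player and the strategy trees encoding them. -/
theorem stmt5 {V : Type} {k : ℕ} (G : ModGame V k) :
    Nonempty (ModStrat G ≃ StrategyTree G) := by
  refine ⟨{ toFun := toTree G, invFun := toStrat G,
            left_inv := ?_, right_inv := ?_ }⟩
  · intro s
    apply ModStrat.ext'
    funext m l
    show stratF G (toTree G s) m l = s.f m l
    by_cases hh : l.head? = some (G.entry m)
    swap
    · rw [stratF, if_neg hh]
      symm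
      rw [← Option.not_isSome_iff_eq_none]
      intro hs
      obtain ⟨⟨hh', -⟩, -⟩ := (s.dom m l).mp hs
      exact hh hh'
    by_cases hcc : List.Chain' (GRel G) l
    swap
    · rw [stratF_chain_none _ hcc]
      symm
      rw [← Option.not_isSome_iff_eq_none]
      intro hs
      obtain ⟨⟨-, hc'⟩, -⟩ := (s.dom m l).mp hs
      exact hcc hc'
    obtain ⟨a, rest, rfl⟩ : ∃ a rest, l = a :: rest := by
      cases l with
      | nil => simp at hh
      | cons a t => exact ⟨a, t, rfl⟩
    obtain rfl : a = G.entry m := by simpa using hh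
    obtain ⟨p, w, hrun⟩ := chain_run rest _ hcc
    obtain ⟨-, -, hl'⟩ := run_spec hrun
    have hlab : (toTree G s).lab m p =
        Lab.nd w ((s.f m (G.entry m :: rest)).bind (idxOf G w)) :=
      labF_some hrun
    rw [stratF_eq (toTree G s) hrun hlab]
    cases hf : s.f m (G.entry m :: rest) with
    | none => rfl
    | some v =>
      obtain ⟨i, hi⟩ := s.legal m _ v w hl' hf
      rw [Option.bind_some, idxOf_eq_some hi, Option.bind_some, hi]
  · intro t
    apply StrategyTree.ext'
    funext m p
    show labF G (toStrat G t) m p = t.lab m p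
    cases hr : run G (G.entry m) p with
    | none => rw [labF_none hr, lab_run_none t hr]
    | some lw =>
      obtain ⟨l, w⟩ := lw
      obtain ⟨c, hlab⟩ := lab_run t hr
      rw [labF_some hr, hlab]
      congr 1
      have hf : (toStrat G t).f m l = c.bind (G.succs w) :=
        stratF_eq t hr hlab
      rw [hf]
      cases c with
      | none => rfl
      | some j =>
        have hP0 : G.isP0 w := by
          by_contra hn
          have := (t.choice m p w (some j) hlab).2 hn
          cases this
        obtain ⟨j', hj', hsome⟩ := (t.choice m p w (some j) hlab).1 hP0
        obtain rfl : j = j' := by injection hj'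
        obtain ⟨v, hv⟩ := Option.isSome_iff_exists.mp hsome
        rw [Option.bind_some, hv, Option.bind_some, idxOf_eq_some hv]
end

section
/- Correctness of the top-symbol tracking in the VPA-to-finite-automaton reduction: let P be a VPA with stack alphabet Γ ∪ {γ⊥}, and consider the run of P over a well-nested prefix of an ω-word. After processing any prefix, the top stack symbol of P is determined by: γ⊥ if all calls so far are matched or the stack is empty, and otherwise the symbol pushed at the most recent unmatched call. Hence a finite-state device that records only the symbol pushed at the innermost pending call, and upon each return receives (from an external oracle/player declaration verified against its record) the symbol pushed at the next-outer pending call, correctly maintains the top-of-stack symbol of P throughout the run. -/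
/-- A pending (unmatched) call of the prefix of length n: a call position
i < n after which the stack never returns to height ≤ height at i within the
prefix. -/
def Pending {Γ : Type} (stack : ℕ → List Γ) (isCall : ℕ → Prop)
    (i n : ℕ) : Prop :=
  i < n ∧ isCall i ∧ ∀ h, i < h → h ≤ n →
    (stack i).length < (stack h).length

lemma inv_aux {Γ : Type} (stack : ℕ → List Γ) (isCall isRet : ℕ → Prop)
    (h0 : stack 0 = [])
    (hstep : ∀ i,
        (isCall i ∧ ∃ γ, stack (i + 1) = γ :: stack i)
      ∨ (isRet i ∧ ((∃ γ, stack i = γ :: stack (i + 1))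
          ∨ (stack i = [] ∧ stack (i + 1) = [])))
      ∨ (¬ isCall i ∧ ¬ isRet i ∧ stack (i + 1) = stack i)) :
    ∀ n s (γ : Γ) t, stack n = s ++ γ :: t →
      ∃ i, i < n ∧ isCall i ∧ stack i = t ∧ stack (i + 1) = γ :: t ∧
        ∀ h, i < h → h ≤ n → t.length < (stack h).length := by
  intro n
  induction n with
  | zero =>
    intro s γ t hdec
    rw [h0] at hdec
    exact absurd hdec (by simp)
  | succ n ih =>
    intro s γ t hdec
    rcases hstep n with ⟨hc, δ, hpush⟩ | ⟨hr, ⟨δ, hpop⟩ | ⟨he1, he2⟩⟩ | ⟨_, _, heq⟩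
    · rw [hpush] at hdec
      cases s with
      | nil =>
        simp only [List.nil_append, List.cons.injEq] at hdec
        refine ⟨n, Nat.lt_succ_self n, hc, hdec.2, ?_, ?_⟩
        · rw [hpush, hdec.1, hdec.2]
        · intro h' h1 h2
          have : h' = n + 1 := by omega
          subst this
          rw [hpush, hdec.2]
          simp
      | cons a s' =>
        simp only [List.cons_append, List.cons.injEq] at hdec
        obtain ⟨i, hi, hci, hsi, hsi1, hht⟩ := ih s' γ t hdec.2
        refine ⟨i, by omega, hci, hsi, hsi1, ?_⟩
        intro h' h1 h2
        rcases Nat.lt_or_ge h' (n + 1) with hlt | hge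
        · exact hht h' h1 (by omega)
        · have : h' = n + 1 := by omega
          subst this
          have h3 := hht n hi (le_refl n)
          rw [hpush]
          simp only [List.length_cons]
          omega
    · -- return, pop
      have hdec' : stack n = (δ :: s) ++ γ :: t := by rw [hpop, hdec]; rfl
      obtain ⟨i, hi, hci, hsi, hsi1, hht⟩ := ih (δ :: s) γ t hdec'
      refine ⟨i, by omega, hci, hsi, hsi1, ?_⟩
      intro h' h1 h2
      rcases Nat.lt_or_ge h' (n + 1) with hlt | hge
      · exact hht h' h1 (by omega)
      · have : h' = n + 1 := by omega
        subst this
        rw [hdec]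
        simp only [List.length_append, List.length_cons]
        omega
    · -- return on empty stack
      rw [he2] at hdec
      exact absurd hdec (by simp)
    · -- internal
      rw [heq] at hdec
      obtain ⟨i, hi, hci, hsi, hsi1, hht⟩ := ih s γ t hdec
      refine ⟨i, by omega, hci, hsi, hsi1, ?_⟩
      intro h' h1 h2
      rcases Nat.lt_or_ge h' (n + 1) with hlt | hge
      · exact hht h' h1 (by omega)
      · have : h' = n + 1 := by omega
        subst this
        rw [heq]
        exact hht n hi (le_refl n)

/-- Correctness of top-symbol tracking in the VPA-to-finite-automaton
reduction: along a run of a VPA (push one symbol on calls, pop one on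
returns with pops on the empty stack leaving it empty — i.e. only γ⊥ —
unchanged on internal letters), after any prefix the top stack symbol is the
symbol pushed at the most recent pending call, and the stack is empty (top
symbol γ⊥) when there is no pending call. -/
theorem stmt15 {Γ : Type} (stack : ℕ → List Γ) (isCall isRet : ℕ → Prop)
    (h0 : stack 0 = [])
    (hstep : ∀ i,
        (isCall i ∧ ∃ γ, stack (i + 1) = γ :: stack i)
      ∨ (isRet i ∧ ((∃ γ, stack i = γ :: stack (i + 1))
          ∨ (stack i = [] ∧ stack (i + 1) = [])))
      ∨ (¬ isCall i ∧ ¬ isRet i ∧ stack (i + 1) = stack i))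
    (n : ℕ) :
    ((¬ ∃ i, Pending stack isCall i n) → stack n = []) ∧
    (∀ i, Pending stack isCall i n →
      (∀ i', Pending stack isCall i' n → i' ≤ i) →
      stack n ≠ [] ∧ (stack n).head? = (stack (i + 1)).head?) := by
  constructor
  · intro hnp
    by_contra hne
    obtain ⟨γ, t, hgt⟩ := List.exists_cons_of_ne_nil hne
    obtain ⟨j, hj, hcj, hsj, hsj1, hht⟩ :=
      inv_aux stack isCall isRet h0 hstep n [] γ t (by simpa using hgt)
    exact hnp ⟨j, hj, hcj, fun h h1 h2 => by rw [hsj]; exact hht h h1 h2⟩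
  · intro i hp hmax
    have hne : stack n ≠ [] := by
      have h1 := hp.2.2 n hp.1 (le_refl n)
      intro he
      rw [he] at h1
      simp at h1
    obtain ⟨γ, t, hgt⟩ := List.exists_cons_of_ne_nil hne
    obtain ⟨j, hj, hcj, hsj, hsj1, hht⟩ :=
      inv_aux stack isCall isRet h0 hstep n [] γ t (by simpa using hgt)
    have hpj : Pending stack isCall j n :=
      ⟨hj, hcj, fun h h1 h2 => by rw [hsj]; exact hht h h1 h2⟩
    have hji : j = i := by
      by_contra hne'
      have hji' : j < i := lt_of_le_of_ne (hmax j hpj) hne'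
      have h1 : t.length < (stack i).length := hht i hji' (le_of_lt hp.1)
      have h2 : (stack i).length < (stack n).length := hp.2.2 n hp.1 (le_refl n)
      rw [hgt] at h2
      simp only [List.length_cons] at h2
      omega
    subst hji
    exact ⟨hne, by rw [hgt, hsj1]⟩
end
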